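/- Let p be an integer and α a non-negative real. If G is a graph in which every subgraph H with at most p vertices has at most α·|V(H)| edges, and every non-empty induced subgraph of G contains an s-island inducing a subgraph whose components all have at most p vertices (i.e., col_{⋆,p}(G) ≤ s), then |E(G)| ≤ |V(G)|·(α + s − 1); consequently the average degree of G is less than 2(col_{⋆,p}(G) + α). -/

import Mathlib

open Finset

section Aux

variable {V : Type} [Fintype V] [DecidableEq V]

lemma island_edges (G : SimpleGraph V) [DecidableRel G.Adj] (p : ℕ) (α : ℝ) (hα : 0 ≤ α)
    (hsparse : ∀ S : Finset V, S.card ≤ p →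
      (((S ×ˢ S).filter fun q => G.Adj q.1 q.2).card : ℝ) ≤ 2 * (α * S.card))
    (I : Finset V)
    (hcomp : ∀ v : (I : Set V), {w | (G.induce (I : Set V)).Reachable v w}.ncard ≤ p) :
    (((I ×ˢ I).filter fun q => G.Adj q.1 q.2).card : ℝ) ≤ 2 * (α * I.card) := by
  classical
  set R : V → V → Prop := fun u w => ∃ (hu : u ∈ I) (hw : w ∈ I),
    (G.induce (I : Set V)).Reachable ⟨u, hu⟩ ⟨w, hw⟩ with hRdef
  have hR_refl : ∀ u (hu : u ∈ I), R u u := fun u hu => ⟨hu, hu, .refl _⟩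
  have hR_symm : ∀ u w, R u w → R w u := by
    rintro u w ⟨hu, hw, h⟩; exact ⟨hw, hu, h.symm⟩
  have hR_trans : ∀ u w x, R u w → R w x → R u x := by
    rintro u w x ⟨hu, hw, h1⟩ ⟨hw', hx, h2⟩; exact ⟨hu, hx, h1.trans h2⟩
  set f : V → Finset V := fun u => I.filter (R u) with hfdef
  have hf_sub : ∀ u, f u ⊆ I := fun u => filter_subset _ _
  have hf_mem : ∀ u (hu : u ∈ I), u ∈ f u := fun u hu =>
    mem_filter.2 ⟨hu, hR_refl u hu⟩
  have hf_eq : ∀ u w, R u w → f u = f w := by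
    intro u w h
    ext x
    simp only [hfdef, mem_filter, and_congr_right_iff]
    exact fun _ => ⟨fun h2 => hR_trans _ _ _ (hR_symm _ _ h) h2,
      fun h2 => hR_trans _ _ _ h h2⟩
  have hf_card : ∀ u (hu : u ∈ I), (f u).card ≤ p := by
    intro u hu
    have hfin : {w : (I : Set V) | (G.induce (I : Set V)).Reachable ⟨u, hu⟩ w}.Finite :=
      Set.toFinite _
    calc (f u).card ≤ hfin.toFinset.card := by
          apply Finset.card_le_card_of_injOn
            (fun w => if h : w ∈ I then (⟨w, h⟩ : (I : Set V)) else ⟨u, hu⟩)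
          · intro w hw
            rcases mem_filter.1 hw with ⟨hwI, hw', hw'', hreach⟩
            simp only [dif_pos hwI, Finset.mem_coe, Set.Finite.mem_toFinset, Set.mem_setOf_eq]
            exact hreach
          · intro a ha b hb hab
            have haI : a ∈ I := hf_sub u ha
            have hbI : b ∈ I := hf_sub u hb
            simpa [dif_pos haI, dif_pos hbI, Subtype.ext_iff] using hab
      _ ≤ p := by
          rw [← Set.ncard_eq_toFinset_card _ hfin]
          exact hcomp ⟨u, hu⟩
  set comps : Finset (Finset V) := I.image f with hcompsdef
  have hdisj : ∀ C ∈ comps, ∀ C' ∈ comps, C ≠ C' → Disjoint C C' := by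
    intro C hC C' hC' hne
    rcases mem_image.1 hC with ⟨u, hu, rfl⟩
    rcases mem_image.1 hC' with ⟨w, hw, rfl⟩
    rw [Finset.disjoint_left]
    intro x hx hx'
    exact hne (hf_eq u w (hR_trans _ _ _ (mem_filter.1 hx).2
      (hR_symm _ _ (mem_filter.1 hx').2)))
  have hbiUnion : comps.biUnion id = I := by
    apply Finset.Subset.antisymm
    · intro x hx
      rcases mem_biUnion.1 hx with ⟨C, hC, hxC⟩
      rcases mem_image.1 hC with ⟨u, hu, rfl⟩
      exact hf_sub u hxC
    · intro x hx
      exact mem_biUnion.2 ⟨f x, mem_image_of_mem f hx, hf_mem x hx⟩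
  have hsum_card : ∑ C ∈ comps, C.card = I.card := by
    rw [← hbiUnion]
    exact (Finset.card_biUnion (fun C hC C' hC' h => hdisj C hC C' hC' h)).symm
  have hTdecomp : (I ×ˢ I).filter (fun q => G.Adj q.1 q.2) =
      comps.biUnion (fun C => (C ×ˢ C).filter (fun q => G.Adj q.1 q.2)) := by
    ext ⟨u, w⟩
    simp only [mem_filter, mem_product, mem_biUnion]
    constructor
    · rintro ⟨⟨hu, hw⟩, hadj⟩
      refine ⟨f u, mem_image_of_mem f hu, ⟨hf_mem u hu, ?_⟩, hadj⟩
      exact mem_filter.2 ⟨hw, hu, hw, SimpleGraph.Adj.reachable (by exact hadj)⟩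
    · rintro ⟨C, hC, ⟨hu, hw⟩, hadj⟩
      rcases mem_image.1 hC with ⟨x, hx, rfl⟩
      exact ⟨⟨hf_sub x hu, hf_sub x hw⟩, hadj⟩
  rw [hTdecomp]
  have hcardbi : ((comps.biUnion (fun C => (C ×ˢ C).filter (fun q => G.Adj q.1 q.2))).card : ℝ)
      = ∑ C ∈ comps, (((C ×ˢ C).filter (fun q => G.Adj q.1 q.2)).card : ℝ) := by
    rw [card_biUnion]
    · push_cast; ring
    · intro C hC C' hC' hne
      rw [Function.onFun, Finset.disjoint_left]
      rintro ⟨u, w⟩ h1 h2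
      have hu1 : u ∈ C := (mem_product.1 (mem_filter.1 h1).1).1
      have hu2 : u ∈ C' := (mem_product.1 (mem_filter.1 h2).1).1
      exact (Finset.disjoint_left.1 (hdisj C hC C' hC' hne)) hu1 hu2
  rw [hcardbi]
  calc ∑ C ∈ comps, (((C ×ˢ C).filter (fun q => G.Adj q.1 q.2)).card : ℝ)
      ≤ ∑ C ∈ comps, 2 * (α * C.card) := by
        apply Finset.sum_le_sum
        intro C hC
        rcases mem_image.1 hC with ⟨u, hu, rfl⟩
        exact hsparse _ (hf_card u hu)
    _ = 2 * (α * I.card) := by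
        rw [← hsum_card]; push_cast; rw [Finset.mul_sum, Finset.mul_sum]

end Aux

/-- if every subgraph `H` of `G` with at most `p` vertices has at most
`α·|V(H)|` edges, and `col_{⋆,p}(G) ≤ s` (every nonempty induced subgraph `G[S]` contains
an `s`-island `I` all of whose induced components have at most `p` vertices), then
`|E(G)| ≤ |V(G)|·(α + s - 1)`; consequently the average degree of `G` is less than
`2(s + α)`. -/
theorem stmt_5 {V : Type} [Fintype V] [DecidableEq V]
    (G : SimpleGraph V) [DecidableRel G.Adj]
    (p s : ℕ) (hs : 1 ≤ s) (α : ℝ) (hα : 0 ≤ α)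
    (hsparse : ∀ S : Finset V, S.card ≤ p →
      (((S ×ˢ S).filter fun q => G.Adj q.1 q.2).card : ℝ) ≤ 2 * (α * S.card))
    (hcol : ∀ S : Finset V, S.Nonempty → ∃ I ⊆ S, I.Nonempty ∧
      (∀ v ∈ I, ((G.neighborFinset v ∩ S) \ I).card < s) ∧
      ∀ v : (I : Set V), {w | (G.induce (I : Set V)).Reachable v w}.ncard ≤ p) :
    (G.edgeFinset.card : ℝ) ≤ (Fintype.card V) * (α + s - 1) ∧
      (Nonempty V →
        2 * (G.edgeFinset.card : ℝ) / (Fintype.card V) < 2 * (s + α)) := by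
  classical
  have key : ∀ n (S : Finset V), S.card ≤ n →
      (((S ×ˢ S).filter fun q => G.Adj q.1 q.2).card : ℝ) ≤ 2 * S.card * (α + s - 1) := by
    intro n
    induction n with
    | zero =>
        intro S hS
        rw [Finset.card_eq_zero.mp (Nat.le_zero.mp hS)]
        simp
    | succ n ih =>
        intro S hS
        rcases S.eq_empty_or_nonempty with rfl | hSne
        · simp
        obtain ⟨I, hIS, hIne, hisland, hcompI⟩ := hcol S hSne
        -- four parts
        set P := (S ×ˢ S).filter (fun q : V × V => G.Adj q.1 q.2) with hP
        set T := (I ×ˢ I).filter (fun q : V × V => G.Adj q.1 q.2) with hT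
        set A := ((S \ I) ×ˢ (S \ I)).filter (fun q : V × V => G.Adj q.1 q.2) with hA
        set C1 := I.biUnion (fun u => ((G.neighborFinset u ∩ S) \ I).image (Prod.mk u)) with hC1
        set C2 := I.biUnion (fun u => ((G.neighborFinset u ∩ S) \ I).image (fun w => (w, u))) with hC2
        have hPsub : P ⊆ T ∪ (C1 ∪ (C2 ∪ A)) := by
          rintro ⟨u, w⟩ hq
          rcases mem_filter.1 hq with ⟨hmem, hadj⟩
          rcases mem_product.1 hmem with ⟨huS, hwS⟩
          simp only [mem_union]
          by_cases huI : u ∈ I <;> by_cases hwI : w ∈ I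
          · exact Or.inl (mem_filter.2 ⟨mem_product.2 ⟨huI, hwI⟩, hadj⟩)
          · refine Or.inr (Or.inl (mem_biUnion.2 ⟨u, huI, ?_⟩))
            exact mem_image.2 ⟨w, by simp [hadj, hwS, hwI], rfl⟩
          · refine Or.inr (Or.inr (Or.inl (mem_biUnion.2 ⟨w, hwI, ?_⟩)))
            exact mem_image.2 ⟨u, by simp [hadj.symm, huS, huI], rfl⟩
          · exact Or.inr (Or.inr (Or.inr (mem_filter.2
              ⟨mem_product.2 ⟨mem_sdiff.2 ⟨huS, huI⟩, mem_sdiff.2 ⟨hwS, hwI⟩⟩, hadj⟩)))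
        have hPcard : P.card ≤ T.card + C1.card + C2.card + A.card := by
          calc P.card ≤ (T ∪ (C1 ∪ (C2 ∪ A))).card := Finset.card_le_card hPsub
            _ ≤ T.card + (C1 ∪ (C2 ∪ A)).card := Finset.card_union_le _ _
            _ ≤ T.card + (C1.card + (C2 ∪ A).card) :=
                Nat.add_le_add_left (Finset.card_union_le _ _) _
            _ ≤ T.card + (C1.card + (C2.card + A.card)) :=
                Nat.add_le_add_left (Nat.add_le_add_left (Finset.card_union_le _ _) _) _
            _ = T.card + C1.card + C2.card + A.card := by ring
        have hC1card : C1.card ≤ I.card * (s - 1) := by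
          calc C1.card ≤ ∑ u ∈ I, (((G.neighborFinset u ∩ S) \ I).image (Prod.mk u)).card :=
                Finset.card_biUnion_le
            _ ≤ ∑ u ∈ I, (s - 1) := by
                apply Finset.sum_le_sum
                intro u hu
                calc (((G.neighborFinset u ∩ S) \ I).image (Prod.mk u)).card
                    ≤ ((G.neighborFinset u ∩ S) \ I).card := Finset.card_image_le
                  _ ≤ s - 1 := Nat.le_sub_one_of_lt (hisland u hu)
            _ = I.card * (s - 1) := by rw [Finset.sum_const, smul_eq_mul]
        have hC2card : C2.card ≤ I.card * (s - 1) := by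
          calc C2.card ≤ ∑ u ∈ I, (((G.neighborFinset u ∩ S) \ I).image (fun w => (w, u))).card :=
                Finset.card_biUnion_le
            _ ≤ ∑ u ∈ I, (s - 1) := by
                apply Finset.sum_le_sum
                intro u hu
                calc (((G.neighborFinset u ∩ S) \ I).image (fun w => (w, u))).card
                    ≤ ((G.neighborFinset u ∩ S) \ I).card := Finset.card_image_le
                  _ ≤ s - 1 := Nat.le_sub_one_of_lt (hisland u hu)
            _ = I.card * (s - 1) := by rw [Finset.sum_const, smul_eq_mul]
        have hTcard : (T.card : ℝ) ≤ 2 * (α * I.card) :=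
          island_edges G p α hα hsparse I hcompI
        have hIcardpos : 1 ≤ I.card := Finset.card_pos.2 hIne
        have hsd : (S \ I).card = S.card - I.card := Finset.card_sdiff_of_subset hIS
        have hsd' : (S \ I).card ≤ n := by
          have : I.card ≤ S.card := Finset.card_le_card hIS
          omega
        have hAcard : (A.card : ℝ) ≤ 2 * (S \ I).card * (α + s - 1) := ih _ hsd'
        have hcast : ((S \ I).card : ℝ) = S.card - I.card := by
          rw [hsd]
          have : I.card ≤ S.card := Finset.card_le_card hIS
          push_cast [this]; ring
        have hscast : ((s - 1 : ℕ) : ℝ) = (s : ℝ) - 1 := by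
          push_cast [hs]; ring
        have h1 : (C1.card : ℝ) ≤ (I.card : ℝ) * ((s : ℝ) - 1) := by
          calc (C1.card : ℝ) ≤ ((I.card * (s - 1) : ℕ) : ℝ) := by exact_mod_cast hC1card
            _ = (I.card : ℝ) * ((s : ℝ) - 1) := by push_cast [hs]; ring
        have h2 : (C2.card : ℝ) ≤ (I.card : ℝ) * ((s : ℝ) - 1) := by
          calc (C2.card : ℝ) ≤ ((I.card * (s - 1) : ℕ) : ℝ) := by exact_mod_cast hC2card
            _ = (I.card : ℝ) * ((s : ℝ) - 1) := by push_cast [hs]; ring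
        have hPcard' : (P.card : ℝ) ≤ (T.card : ℝ) + C1.card + C2.card + A.card := by
          exact_mod_cast hPcard
        calc (P.card : ℝ) ≤ (T.card : ℝ) + C1.card + C2.card + A.card := hPcard'
          _ ≤ 2 * (α * I.card) + (I.card : ℝ) * ((s : ℝ) - 1) + (I.card : ℝ) * ((s : ℝ) - 1)
              + 2 * (S \ I).card * (α + s - 1) := by gcongr
          _ = 2 * S.card * (α + s - 1) := by rw [hcast]; ring
  have huniv : ((Finset.univ ×ˢ Finset.univ).filter
      (fun q : V × V => G.Adj q.1 q.2)).card = 2 * G.edgeFinset.card := by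
    rw [← SimpleGraph.sum_degrees_eq_twice_card_edges]
    rw [Finset.card_filter, Finset.sum_product]
    congr 1
    ext v
    rw [← SimpleGraph.card_neighborFinset_eq_degree]
    have hnb : G.neighborFinset v = Finset.univ.filter (G.Adj v) := by
      ext w; simp
    rw [hnb, Finset.card_filter]
  have hmain := key (Fintype.card V) Finset.univ (le_of_eq (Finset.card_univ))
  rw [huniv] at hmain
  rw [Finset.card_univ] at hmain
  have hE : (G.edgeFinset.card : ℝ) ≤ (Fintype.card V) * (α + s - 1) := by
    have : ((2 * G.edgeFinset.card : ℕ) : ℝ) = 2 * (G.edgeFinset.card : ℝ) := by push_cast; ring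
    rw [this] at hmain
    linarith
  refine ⟨hE, fun hne => ?_⟩
  have hn : 0 < (Fintype.card V : ℝ) := by
    exact_mod_cast Fintype.card_pos
  rw [div_lt_iff₀ hn]
  have hsr : (1 : ℝ) ≤ s := by exact_mod_cast hs
  nlinarith
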